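/- Let (α_k)_{k≥1} be a sequence in 𝔻 and (a_k)_{k≥1} a sequence in 𝔻, with the orthogonal rational functions φ_k, φ*_k defined by the recurrence, and define χ_0 = 1, χ_{2n} = b^e_n φ*_{2n} and χ_{2n+1} = b^e_n φ_{2n+1} for n ≥ 0, where b^e_n(z) = ∏_{k=1}^n ϖ_{2k}(z)/ϖ*_{2k}(z) (b^e_0 = 1). Then the following five-term recurrence relations hold as identities of rational functions: ϖ*_0 χ_0 = ρ^+_1 ϖ_1 χ_1 − a_1 ϖ_0 χ_0, and for every n ≥ 1: ϖ*_{2n−1} χ_{2n−1} = ρ^+_{2n} ρ^+_{2n+1} ϖ_{2n+1} χ_{2n+1} − ρ^+_{2n} a_{2n+1} ϖ_{2n} χ_{2n} − conj(a_{2n−1}) a_{2n} ϖ_{2n−1} χ_{2n−1} − ρ^−_{2n−1} a_{2n} ϖ_{2n−2} χ_{2n−2}, and ϖ*_{2n} χ_{2n} = conj(a_{2n}) ρ^+_{2n+1} ϖ_{2n+1} χ_{2n+1} − conj(a_{2n}) a_{2n+1} ϖ_{2n} χ_{2n} + conj(a_{2n−1}) ρ^−_{2n} ϖ_{2n−1}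 χ_{2n−1} + ρ^−_{2n−1} ρ^−_{2n} ϖ_{2n−2} χ_{2n−2}. -/

import Mathlib

/-!
Orthogonal rational functions on the unit circle, as pointwise-defined functions:
`φ_0 = φ*_0 = 1` and, for `k ≥ 1`,
`φ_k = e_k (ϖ_{k−1}/ϖ_k)(ζ_{k−1} φ_{k−1} + a_k φ*_{k−1})`,
`φ*_k = e_k (ϖ_{k−1}/ϖ_k)(conj(a_k) ζ_{k−1} φ_{k−1} + φ*_{k−1})`.
-/

noncomputable section

/-- `ϖ_k(z) = 1 − conj(α_k) z`. -/
def pw (α : ℕ → ℂ) (k : ℕ) (z : ℂ) : ℂ := 1 - (starRingEnd ℂ) (α k) * z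

/-- `ϖ*_k(z) = z − α_k`. -/
def pws (α : ℕ → ℂ) (k : ℕ) (z : ℂ) : ℂ := z - α k

/-- `η_k = (1 − |α_k|²)^{1/2}`. -/
def etaS (α : ℕ → ℂ) (k : ℕ) : ℝ := Real.sqrt (1 - ‖α k‖ ^ 2)

/-- `ρ_k = (1 − |a_k|²)^{1/2}`. -/
def rhoS (a : ℕ → ℂ) (k : ℕ) : ℝ := Real.sqrt (1 - ‖a k‖ ^ 2)

/-- `ρ_k⁺ = (η_{k−1}/η_k) ρ_k`. -/
def rhoP (α a : ℕ → ℂ) (k : ℕ) : ℝ := etaS α (k - 1) / etaS α k * rhoS a k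

/-- `ρ_k⁻ = (η_k/η_{k−1}) ρ_k`. -/
def rhoM (α a : ℕ → ℂ) (k : ℕ) : ℝ := etaS α k / etaS α (k - 1) * rhoS a k

/-- `e_k = η_k/(η_{k−1} ρ_k)`. -/
def eS (α a : ℕ → ℂ) (k : ℕ) : ℝ := etaS α k / (etaS α (k - 1) * rhoS a k)

/-- The pair `(φ_k, φ*_k)` of orthogonal rational functions, defined by the recurrence. -/
def orfFun (α a : ℕ → ℂ) : ℕ → (ℂ → ℂ) × (ℂ → ℂ)
  | 0 => (fun _ => 1, fun _ => 1)
  | k + 1 =>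
    (fun z => (eS α a (k + 1) : ℂ) * (pw α k z / pw α (k + 1) z) *
        ((pws α k z / pw α k z) * (orfFun α a k).1 z + a (k + 1) * (orfFun α a k).2 z),
     fun z => (eS α a (k + 1) : ℂ) * (pw α k z / pw α (k + 1) z) *
        ((starRingEnd ℂ) (a (k + 1)) * (pws α k z / pw α k z) * (orfFun α a k).1 z +
          (orfFun α a k).2 z))

/-- `b^e_n(z) = ∏_{k=1}^n ϖ_{2k}(z)/ϖ*_{2k}(z)`. -/
def beF (α : ℕ → ℂ) (n : ℕ) (z : ℂ) : ℂ :=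
  ∏ k ∈ Finset.range n, pw α (2 * k + 2) z / pws α (2 * k + 2) z

/-- `χ_0 = 1`, `χ_{2n} = b^e_n φ*_{2n}`, `χ_{2n+1} = b^e_n φ_{2n+1}`. -/
def chiF (α a : ℕ → ℂ) (m : ℕ) (z : ℂ) : ℂ :=
  beF α (m / 2) z * (if m % 2 = 0 then (orfFun α a m).2 z else (orfFun α a m).1 z)

lemma orf_fst (α a : ℕ → ℂ) (k : ℕ) (z : ℂ) (h0 : pw α k z ≠ 0) (h1 : pw α (k+1) z ≠ 0) :
    pw α (k+1) z * (orfFun α a (k+1)).1 z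
      = (eS α a (k+1) : ℂ) * (pws α k z * (orfFun α a k).1 z
          + a (k+1) * (pw α k z * (orfFun α a k).2 z)) := by
  simp only [orfFun]
  field_simp

lemma orf_snd (α a : ℕ → ℂ) (k : ℕ) (z : ℂ) (h0 : pw α k z ≠ 0) (h1 : pw α (k+1) z ≠ 0) :
    pw α (k+1) z * (orfFun α a (k+1)).2 z
      = (eS α a (k+1) : ℂ) * ((starRingEnd ℂ) (a (k+1)) * (pws α k z * (orfFun α a k).1 z)
          + pw α k z * (orfFun α a k).2 z) := by
  simp only [orfFun]
  field_simp

lemma etaS_pos (α : ℕ → ℂ) (k : ℕ) (h : ‖α k‖ < 1) : 0 < etaS α k := by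
  have h0 : 0 ≤ ‖α k‖ := norm_nonneg _
  apply Real.sqrt_pos.2; nlinarith

lemma rhoS_pos (a : ℕ → ℂ) (k : ℕ) (h : ‖a k‖ < 1) : 0 < rhoS a k := by
  have h0 : 0 ≤ ‖a k‖ := norm_nonneg _
  apply Real.sqrt_pos.2; nlinarith

lemma rhoP_mul_eS (α a : ℕ → ℂ) (k : ℕ) (h1 : etaS α (k-1) ≠ 0) (h2 : etaS α k ≠ 0)
    (h3 : rhoS a k ≠ 0) : rhoP α a k * eS α a k = 1 := by
  unfold rhoP eS; field_simp

lemma eS_mul_rhoS_sq (α a : ℕ → ℂ) (k : ℕ) (h1 : etaS α (k-1) ≠ 0) (h3 : rhoS a k ≠ 0) :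
    eS α a k * rhoS a k ^ 2 = rhoM α a k := by
  unfold eS rhoM; field_simp

lemma rhoS_sq_complex (a : ℕ → ℂ) (k : ℕ) (h : ‖a k‖ < 1) :
    ((rhoS a k : ℝ) : ℂ)^2 = 1 - (starRingEnd ℂ) (a k) * a k := by
  have h1 : (rhoS a k)^2 = 1 - ‖a k‖^2 := Real.sq_sqrt (by nlinarith [norm_nonneg (a k)])
  have h2 : (starRingEnd ℂ) (a k) * a k = (‖a k‖^2 : ℂ) := by
    rw [mul_comm, Complex.mul_conj]
    norm_cast
    rw [Complex.normSq_eq_norm_sq]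
  rw [h2, ← Complex.ofReal_pow, h1]
  push_cast
  ring

/-- the five-term recurrence for the `χ_n`, as identities of rational
functions (i.e. at every point where the factors `ϖ_k`, `ϖ*_k` with `k ≤ 2n+1` do not
vanish). -/
theorem chi_five_term_recurrence
    (α a : ℕ → ℂ) (hα0 : α 0 = 0) (ha0 : a 0 = 1)
    (hα : ∀ k, 1 ≤ k → ‖α k‖ < 1) (ha : ∀ k, 1 ≤ k → ‖a k‖ < 1) :
    (∀ z : ℂ, (∀ k, k ≤ 1 → pw α k z ≠ 0 ∧ pws α k z ≠ 0) →
      pws α 0 z * chiF α a 0 z =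
        (rhoP α a 1 : ℂ) * (pw α 1 z * chiF α a 1 z) -
          a 1 * (pw α 0 z * chiF α a 0 z)) ∧
    ∀ n : ℕ, 1 ≤ n → ∀ z : ℂ,
      (∀ k, k ≤ 2 * n + 1 → pw α k z ≠ 0 ∧ pws α k z ≠ 0) →
      (pws α (2 * n - 1) z * chiF α a (2 * n - 1) z =
          (rhoP α a (2 * n) : ℂ) * (rhoP α a (2 * n + 1) : ℂ) *
              (pw α (2 * n + 1) z * chiF α a (2 * n + 1) z) -
            (rhoP α a (2 * n) : ℂ) * a (2 * n + 1) * (pw α (2 * n) z * chiF α a (2 * n) z) -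
            (starRingEnd ℂ) (a (2 * n - 1)) * a (2 * n) *
              (pw α (2 * n - 1) z * chiF α a (2 * n - 1) z) -
            (rhoM α a (2 * n - 1) : ℂ) * a (2 * n) *
              (pw α (2 * n - 2) z * chiF α a (2 * n - 2) z)) ∧
        (pws α (2 * n) z * chiF α a (2 * n) z =
          (starRingEnd ℂ) (a (2 * n)) * (rhoP α a (2 * n + 1) : ℂ) *
              (pw α (2 * n + 1) z * chiF α a (2 * n + 1) z) -
            (starRingEnd ℂ) (a (2 * n)) * a (2 * n + 1) *
              (pw α (2 * n) z * chiF α a (2 * n) z) +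
            (starRingEnd ℂ) (a (2 * n - 1)) * (rhoM α a (2 * n) : ℂ) *
              (pw α (2 * n - 1) z * chiF α a (2 * n - 1) z) +
            (rhoM α a (2 * n - 1) : ℂ) * (rhoM α a (2 * n) : ℂ) *
              (pw α (2 * n - 2) z * chiF α a (2 * n - 2) z)) := by
  have hα' : ∀ k, ‖α k‖ < 1 := by
    intro k
    cases k with
    | zero => simp [hα0]
    | succ k => exact hα _ (by omega)
  have hη : ∀ k, etaS α k ≠ 0 := fun k => ne_of_gt (etaS_pos α k (hα' k))
  have hρ : ∀ k, 1 ≤ k → rhoS a k ≠ 0 := fun k hk => ne_of_gt (rhoS_pos a k (ha k hk))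
  have hp : ∀ k, 1 ≤ k → (rhoP α a k : ℂ) * (eS α a k : ℂ) = 1 := by
    intro k hk
    rw [← Complex.ofReal_mul, rhoP_mul_eS α a k (hη _) (hη _) (hρ _ hk)]
    norm_num
  have hq : ∀ k, 1 ≤ k → (eS α a k : ℂ) * ((rhoS a k : ℝ) : ℂ)^2 = (rhoM α a k : ℂ) := by
    intro k hk
    rw [← Complex.ofReal_pow, ← Complex.ofReal_mul, eS_mul_rhoS_sq α a k (hη _) (hρ _ hk)]
  constructor
  · intro z h
    have hw0 : pw α 0 z ≠ 0 := (h 0 (by norm_num)).1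
    have hw1 : pw α 1 z ≠ 0 := (h 1 le_rfl).1
    have e1 := orf_fst α a 0 z hw0 hw1
    have p1 := hp 1 le_rfl
    simp only [chiF] at *
    norm_num [beF, orfFun] at *
    linear_combination (-(rhoP α a 1 : ℂ)) * e1 - (pws α 0 z + a 1 * pw α 0 z) * p1
  · intro n hn z h
    obtain ⟨m, rfl⟩ : ∃ m, n = m + 1 := ⟨n - 1, by omega⟩
    have hw : ∀ k, k ≤ 2*m+3 → pw α k z ≠ 0 := fun k hk => (h k (by omega)).1
    have hws : ∀ k, k ≤ 2*m+3 → pws α k z ≠ 0 := fun k hk => (h k (by omega)).2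
    rw [show 2*(m+1) - 1 = 2*m+1 from by omega, show 2*(m+1) - 2 = 2*m from by omega,
        show 2*(m+1) + 1 = 2*m+3 from by omega, show 2*(m+1) = 2*m+2 from by omega]
    set F0 := (orfFun α a (2*m)).1 z
    set S0 := (orfFun α a (2*m)).2 z
    set F1 := (orfFun α a (2*m+1)).1 z
    set S1 := (orfFun α a (2*m+1)).2 z
    set F2 := (orfFun α a (2*m+2)).1 z
    set S2 := (orfFun α a (2*m+2)).2 z
    set F3 := (orfFun α a (2*m+3)).1 z
    set b := beF α m z
    have hb : beF α (m+1) z = b * (pw α (2*m+2) z / pws α (2*m+2) z) := by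
      unfold beF b
      rw [Finset.prod_range_succ]
      rfl
    have c0 : chiF α a (2*m) z = b * S0 := by
      unfold chiF
      rw [show 2*m/2 = m from by omega, if_pos (by omega : 2*m % 2 = 0)]
    have c1 : chiF α a (2*m+1) z = b * F1 := by
      unfold chiF
      rw [show (2*m+1)/2 = m from by omega, if_neg (by omega : ¬ (2*m+1) % 2 = 0)]
    have c2 : chiF α a (2*m+2) z = beF α (m+1) z * S2 := by
      unfold chiF
      rw [show (2*m+2)/2 = m+1 from by omega, if_pos (by omega : (2*m+2) % 2 = 0)]
    have c3 : chiF α a (2*m+3) z = beF α (m+1) z * F3 := by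
      unfold chiF
      rw [show (2*m+3)/2 = m+1 from by omega, if_neg (by omega : ¬ (2*m+3) % 2 = 0)]
    have e1 : pw α (2*m+1) z * F1 = (eS α a (2*m+1) : ℂ) *
        (pws α (2*m) z * F0 + a (2*m+1) * (pw α (2*m) z * S0)) :=
      orf_fst α a (2*m) z (hw _ (by omega)) (hw _ (by omega))
    have e2 : pw α (2*m+1) z * S1 = (eS α a (2*m+1) : ℂ) *
        ((starRingEnd ℂ) (a (2*m+1)) * (pws α (2*m) z * F0) + pw α (2*m) z * S0) :=
      orf_snd α a (2*m) z (hw _ (by omega)) (hw _ (by omega))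
    have e3 : pw α (2*m+2) z * F2 = (eS α a (2*m+2) : ℂ) *
        (pws α (2*m+1) z * F1 + a (2*m+2) * (pw α (2*m+1) z * S1)) :=
      orf_fst α a (2*m+1) z (hw _ (by omega)) (hw _ (by omega))
    have e4 : pw α (2*m+2) z * S2 = (eS α a (2*m+2) : ℂ) *
        ((starRingEnd ℂ) (a (2*m+2)) * (pws α (2*m+1) z * F1) + pw α (2*m+1) z * S1) :=
      orf_snd α a (2*m+1) z (hw _ (by omega)) (hw _ (by omega))
    have e5 : pw α (2*m+3) z * F3 = (eS α a (2*m+3) : ℂ) *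
        (pws α (2*m+2) z * F2 + a (2*m+3) * (pw α (2*m+2) z * S2)) :=
      orf_fst α a (2*m+2) z (hw _ (by omega)) (hw _ (by omega))
    have p2 := hp (2*m+2) (by omega)
    have p3 := hp (2*m+3) (by omega)
    have q1 := hq (2*m+1) (by omega)
    have q2 := hq (2*m+2) (by omega)
    have r1 := rhoS_sq_complex a (2*m+1) (ha _ (by omega))
    have r2 := rhoS_sq_complex a (2*m+2) (ha _ (by omega))
    have hs2 : pws α (2*m+2) z ≠ 0 := hws _ (by omega)
    -- derived relations
    have hA : (rhoP α a (2*m+3) : ℂ) * (pw α (2*m+3) z * F3)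
        - a (2*m+3) * (pw α (2*m+2) z * S2) = pws α (2*m+2) z * F2 := by
      linear_combination (rhoP α a (2*m+3) : ℂ) * e5
        + (pws α (2*m+2) z * F2 + a (2*m+3) * (pw α (2*m+2) z * S2)) * p3
    have hB : (rhoP α a (2*m+2) : ℂ) * (pw α (2*m+2) z * F2)
        = pws α (2*m+1) z * F1 + a (2*m+2) * (pw α (2*m+1) z * S1) := by
      linear_combination (rhoP α a (2*m+2) : ℂ) * e3
        + (pws α (2*m+1) z * F1 + a (2*m+2) * (pw α (2*m+1) z * S1)) * p2
    have hC : (rhoM α a (2*m+1) : ℂ) * (pw α (2*m) z * S0)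
        = pw α (2*m+1) z * S1 - (starRingEnd ℂ) (a (2*m+1)) * (pw α (2*m+1) z * F1) := by
      linear_combination (starRingEnd ℂ) (a (2*m+1)) * e1 - e2
        - (pw α (2*m) z * S0) * q1 + (eS α a (2*m+1) : ℂ) * (pw α (2*m) z * S0) * r1
    have hD : pw α (2*m+2) z * S2 - (starRingEnd ℂ) (a (2*m+2)) * (pw α (2*m+2) z * F2)
        = (rhoM α a (2*m+2) : ℂ) * (pw α (2*m+1) z * S1) := by
      linear_combination e4 - (starRingEnd ℂ) (a (2*m+2)) * e3
        + (pw α (2*m+1) z * S1) * q2 - (eS α a (2*m+2) : ℂ) * (pw α (2*m+1) z * S1) * r2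
    constructor
    · rw [c0, c1, c2, c3, hb]
      field_simp
      linear_combination (-(rhoP α a (2*m+2) : ℂ) * b * pw α (2*m+2) z) * hA
        - (b * pws α (2*m+2) z) * hB + (a (2*m+2) * b * pws α (2*m+2) z) * hC
    · rw [c0, c1, c2, c3, hb]
      field_simp
      linear_combination (b * pws α (2*m+2) z) * hD
        - ((starRingEnd ℂ) (a (2*m+2)) * b * pw α (2*m+2) z) * hA
        - (b * pws α (2*m+2) z * (rhoM α a (2*m+2) : ℂ)) * hC
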